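/- Let q = 2m + 1 with m ≥ 1 an integer, let Ω be the set of all nonzero vectors in {0,1}^q, and fix t ∈ [0,1). Let p_odd assign mass n_{m+1}⁻¹ to each point of Ω_{m+1} and mass 0 elsewhere. Then g(p_odd) = {(m+1)/(2m+1)}·1_q, H(p_odd) is invertible, and {H(p_odd)}⁻¹ = [2(2m+1)/(m+1)]·{I_q − q⁻¹J_q + [1/(2(m+1)(1−t))]·q⁻¹J_q}, where 1_q is the q×1 vector of ones, I_q the identity matrix of order q, and J_q = 1_q1_qᵀ. -/

import Mathlib

open Matrix BigOperators Finset

noncomputable section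

/-- The binary design point (0/1 vector) with support `S`. -/
def ind {q : ℕ} (S : Finset (Fin q)) : Fin q → ℝ := fun i => if i ∈ S then 1 else 0

/-- A design measure on the nonzero binary vectors of length `q`, indexed by
their supports: nonnegative masses summing to 1, with zero mass on the zero vector. -/
def designMeasureB {q : ℕ} (p : Finset (Fin q) → ℝ) : Prop :=
  p ∅ = 0 ∧ (∀ S, 0 ≤ p S) ∧ ∑ S : Finset (Fin q), p S = 1

/-- G(p) = Σ p_x x xᵀ. -/
def GmatB {q : ℕ} (p : Finset (Fin q) → ℝ) : Matrix (Fin q) (Fin q) ℝ :=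
  ∑ S : Finset (Fin q), p S • Matrix.vecMulVec (ind S) (ind S)

/-- g(p) = Σ p_x x. -/
def gvecB {q : ℕ} (p : Finset (Fin q) → ℝ) : Fin q → ℝ :=
  ∑ S : Finset (Fin q), p S • ind S

/-- H(p) = G(p) − t g(p) g(p)ᵀ. -/
def HmatB {q : ℕ} (t : ℝ) (p : Finset (Fin q) → ℝ) : Matrix (Fin q) (Fin q) ℝ :=
  GmatB p - t • Matrix.vecMulVec (gvecB p) (gvecB p)

/-- The all-ones q×q matrix J_q. -/
def Jmat (q : ℕ) : Matrix (Fin q) (Fin q) ℝ := Matrix.of fun _ _ => 1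

end

lemma count_mem (q k : ℕ) (i : Fin q) :
    ((univ : Finset (Finset (Fin q))).filter fun S => S.card = k + 1 ∧ i ∈ S).card
      = (q - 1).choose k := by
  have h1 : ((univ : Finset (Fin q)).erase i).card = q - 1 := by simp
  rw [← h1, ← Finset.card_powersetCard k ((univ : Finset (Fin q)).erase i)]
  apply Finset.card_nbij' (fun S => S.erase i) (fun T => insert i T)
  · intro S hS
    simp only [Finset.mem_coe, mem_filter, mem_univ, true_and] at hS
    rw [Finset.mem_coe, Finset.mem_powersetCard]
    exact ⟨Finset.erase_subset_erase _ (Finset.subset_univ S),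
      by rw [Finset.card_erase_of_mem hS.2, hS.1]; omega⟩
  · intro T hT
    rw [Finset.mem_coe, Finset.mem_powersetCard] at hT
    have hiT : i ∉ T := fun h => by simpa using hT.1 h
    simp only [Finset.mem_coe, mem_filter, mem_univ, true_and]
    exact ⟨by rw [Finset.card_insert_of_notMem hiT, hT.2], Finset.mem_insert_self _ _⟩
  · intro S hS
    simp only [Finset.mem_coe, mem_filter, mem_univ, true_and] at hS
    exact Finset.insert_erase hS.2
  · intro T hT
    rw [Finset.mem_coe, Finset.mem_powersetCard] at hT
    have hiT : i ∉ T := fun h => by simpa using hT.1 h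
    exact Finset.erase_insert hiT

lemma count_mem2 (q k : ℕ) (i j : Fin q) (hij : i ≠ j) :
    ((univ : Finset (Finset (Fin q))).filter fun S => S.card = k + 2 ∧ i ∈ S ∧ j ∈ S).card
      = (q - 2).choose k := by
  have h1 : (((univ : Finset (Fin q)).erase i).erase j).card = q - 2 := by
    rw [Finset.card_erase_of_mem (by simp [hij.symm]), Finset.card_erase_of_mem (by simp)]
    simp; omega
  rw [← h1, ← Finset.card_powersetCard k _]
  apply Finset.card_nbij' (fun S => (S.erase i).erase j) (fun T => insert i (insert j T))
  · intro S hS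
    simp only [Finset.mem_coe, mem_filter, mem_univ, true_and] at hS
    have hj' : j ∈ S.erase i := Finset.mem_erase.mpr ⟨hij.symm, hS.2.2⟩
    rw [Finset.mem_coe, Finset.mem_powersetCard]
    refine ⟨?_, ?_⟩
    · intro x hx
      simp only [Finset.mem_erase] at hx ⊢
      exact ⟨hx.1, hx.2.1, Finset.mem_univ x⟩
    · rw [Finset.card_erase_of_mem hj', Finset.card_erase_of_mem hS.2.1, hS.1]; omega
  · intro T hT
    rw [Finset.mem_coe, Finset.mem_powersetCard] at hT
    have hjT : j ∉ T := fun h => by simpa using hT.1 h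
    have hiT : i ∉ T := fun h => by simpa [hij.symm] using hT.1 h
    have hijT : i ∉ insert j T := by simp [hij, hiT]
    simp only [Finset.mem_coe, mem_filter, mem_univ, true_and]
    refine ⟨?_, Finset.mem_insert_self _ _, by simp⟩
    rw [Finset.card_insert_of_notMem hijT, Finset.card_insert_of_notMem hjT, hT.2]
  · intro S hS
    simp only [Finset.mem_coe, mem_filter, mem_univ, true_and] at hS
    have hj' : j ∈ S.erase i := Finset.mem_erase.mpr ⟨hij.symm, hS.2.2⟩
    dsimp only; rw [Finset.insert_erase hj', Finset.insert_erase hS.2.1]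
  · intro T hT
    rw [Finset.mem_coe, Finset.mem_powersetCard] at hT
    have hjT : j ∉ T := fun h => by simpa using hT.1 h
    have hiT : i ∉ T := fun h => by simpa [hij.symm] using hT.1 h
    have hijT : i ∉ insert j T := by simp [hij, hiT]
    dsimp only; rw [Finset.erase_insert hijT, Finset.erase_insert hjT]

lemma gvec_entry {q : ℕ} (k : ℕ) (a : ℝ) (i : Fin q) :
    gvecB (fun S : Finset (Fin q) => if S.card = k then a else 0) i
      = (((univ : Finset (Finset (Fin q))).filter fun S => S.card = k ∧ i ∈ S).card : ℝ) * a := by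
  simp only [gvecB, Finset.sum_apply, Pi.smul_apply, smul_eq_mul, ind]
  rw [show (∑ S : Finset (Fin q), (if S.card = k then a else 0) * (if i ∈ S then 1 else 0))
      = ∑ S : Finset (Fin q), (if S.card = k ∧ i ∈ S then a else 0) from
    Finset.sum_congr rfl fun S _ => by
      by_cases h1 : S.card = k <;> by_cases h2 : i ∈ S <;> simp [h1, h2]]
  rw [← Finset.sum_filter, Finset.sum_const, nsmul_eq_mul]

lemma Gmat_entry {q : ℕ} (k : ℕ) (a : ℝ) (i j : Fin q) :
    GmatB (fun S : Finset (Fin q) => if S.card = k then a else 0) i j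
      = (((univ : Finset (Finset (Fin q))).filter
          fun S => S.card = k ∧ i ∈ S ∧ j ∈ S).card : ℝ) * a := by
  simp only [GmatB, Matrix.sum_apply, Matrix.smul_apply, Matrix.vecMulVec_apply,
    smul_eq_mul, ind]
  rw [show (∑ S : Finset (Fin q),
        (if S.card = k then a else 0) * ((if i ∈ S then 1 else 0) * (if j ∈ S then 1 else 0)))
      = ∑ S : Finset (Fin q), (if S.card = k ∧ i ∈ S ∧ j ∈ S then a else 0) from
    Finset.sum_congr rfl fun S _ => by
      by_cases h1 : S.card = k <;> by_cases h2 : i ∈ S <;> by_cases h3 : j ∈ S <;>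
        simp [h1, h2, h3]]
  rw [← Finset.sum_filter, Finset.sum_const, nsmul_eq_mul]

lemma JJ (q : ℕ) : Jmat q * Jmat q = (q : ℝ) • Jmat q := by
  ext i j
  simp [Jmat, Matrix.mul_apply]

lemma mul_oneJ (q : ℕ) (a b x y : ℝ) :
    (a • (1 : Matrix (Fin q) (Fin q) ℝ) + b • Jmat q) * (x • 1 + y • Jmat q)
      = (a*x) • 1 + (a*y + x*b + (q:ℝ)*b*y) • Jmat q := by
  simp only [add_mul, mul_add, smul_mul_assoc, Matrix.mul_smul, one_mul, mul_one,
    JJ, smul_smul]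
  module

theorem statement_17 (m : ℕ) (hm : 1 ≤ m) (t : ℝ) (ht0 : 0 ≤ t) (ht1 : t < 1) :
    gvecB (fun S : Finset (Fin (2*m+1)) =>
        if S.card = m + 1 then ((Nat.choose (2*m+1) (m+1) : ℝ))⁻¹ else 0)
      = (fun _ => ((m : ℝ) + 1) / (2*(m : ℝ) + 1))
    ∧ IsUnit (HmatB t (fun S : Finset (Fin (2*m+1)) =>
        if S.card = m + 1 then ((Nat.choose (2*m+1) (m+1) : ℝ))⁻¹ else 0)).det
    ∧ (HmatB t (fun S : Finset (Fin (2*m+1)) =>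
        if S.card = m + 1 then ((Nat.choose (2*m+1) (m+1) : ℝ))⁻¹ else 0))⁻¹
      = (2*(2*(m : ℝ)+1)/((m : ℝ)+1)) •
          ((1 : Matrix (Fin (2*m+1)) (Fin (2*m+1)) ℝ) - ((2*m+1 : ℝ))⁻¹ • Jmat (2*m+1)
            + (1/(2*((m : ℝ)+1)*(1-t))) • (((2*m+1 : ℝ))⁻¹ • Jmat (2*m+1))) := by
  have htne : (1 : ℝ) - t ≠ 0 := by linarith
  -- real cast of m
  have hmR : (0:ℝ) < (m:ℝ) := by exact_mod_cast hm
  set mr : ℝ := (m : ℝ) with hmr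
  -- n = choose(2m+1, m+1)
  have hnpos : 0 < Nat.choose (2*m+1) (m+1) := Nat.choose_pos (by omega)
  set n : ℝ := (Nat.choose (2*m+1) (m+1) : ℝ) with hn
  have hnne : n ≠ 0 := by
    rw [hn]; exact_mod_cast hnpos.ne'
  set p : Finset (Fin (2*m+1)) → ℝ :=
    (fun S => if S.card = m + 1 then n⁻¹ else 0) with hp
  -- counting values
  set cm : ℝ := (Nat.choose (2*m) m : ℝ) with hcm
  set c1 : ℝ := (Nat.choose (2*m-1) (m-1) : ℝ) with hc1
  -- nat identities
  have hr1 : (2*mr+1) * cm = n * (mr+1) := by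
    have h' : (2*m+1) * Nat.choose (2*m) m = Nat.choose (2*m+1) (m+1) * (m+1) :=
      Nat.add_one_mul_choose_eq (2*m) m
    rw [hcm, hn, hmr]
    exact_mod_cast h'
  have hr2 : 2 * c1 = cm := by
    obtain ⟨m', rfl⟩ : ∃ m', m = m' + 1 := ⟨m - 1, by omega⟩
    have h : (2*m'+2) * Nat.choose (2*m'+1) m' = Nat.choose (2*m'+2) (m'+1) * (m'+1) :=
      Nat.add_one_mul_choose_eq (2*m'+1) m'
    have h' : (2 * Nat.choose (2*m'+1) m') * (m'+1) = Nat.choose (2*m'+2) (m'+1) * (m'+1) := by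
      rw [← h]; ring
    have h'' : 2 * Nat.choose (2*m'+1) m' = Nat.choose (2*m'+2) (m'+1) :=
      Nat.eq_of_mul_eq_mul_right (Nat.succ_pos m') h'
    rw [hc1, hcm, show 2*(m'+1)-1 = 2*m'+1 from by omega, show (m'+1)-1 = m' from by omega,
      show 2*(m'+1) = 2*m'+2 from by omega]
    exact_mod_cast h''
  set c : ℝ := (mr+1)/(2*mr+1) with hc
  have hQne : (2*mr+1) ≠ 0 := by positivity
  have hmne : (mr+1) ≠ 0 := by positivity
  have hv1 : cm * n⁻¹ = c := by
    rw [hc]; field_simp; linear_combination hr1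
  have hv2 : c1 * n⁻¹ = c/2 := by
    have hc1cm : c1 = cm / 2 := by linarith
    rw [hc1cm, show cm / 2 * n⁻¹ = (cm * n⁻¹)/2 from by ring, hv1]
  -- gvec
  have hcnt1 : ∀ i : Fin (2*m+1),
      (((univ : Finset (Finset (Fin (2*m+1)))).filter
        fun S => S.card = m + 1 ∧ i ∈ S).card : ℝ) = cm := by
    intro i
    rw [count_mem (2*m+1) m i, hcm, show 2*m+1-1 = 2*m from by omega]
  have hgv : gvecB p = fun _ => c := by
    funext i
    rw [hp, gvec_entry, hcnt1 i, hv1]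
  -- H = (c/2) • 1 + (c/2 - t*c^2) • J
  have hH : HmatB t p
      = (c/2) • (1 : Matrix (Fin (2*m+1)) (Fin (2*m+1)) ℝ)
        + (c/2 - t*c^2) • Jmat (2*m+1) := by
    ext i j
    simp only [HmatB, Matrix.sub_apply, Matrix.smul_apply, Matrix.vecMulVec_apply, hgv,
      Matrix.add_apply, Matrix.one_apply, Jmat, Matrix.of_apply, smul_eq_mul]
    by_cases hij : i = j
    · subst hij
      rw [hp, Gmat_entry]
      rw [show (((univ : Finset (Finset (Fin (2*m+1)))).filter
          fun S => S.card = m + 1 ∧ i ∈ S ∧ i ∈ S).card : ℝ) = cm from by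
        rw [← hcnt1 i]; congr 2; ext S; simp [and_assoc]]
      rw [hv1]
      simp only [if_pos rfl, if_true]
      ring
    · rw [hp, Gmat_entry]
      rw [show (((univ : Finset (Finset (Fin (2*m+1)))).filter
          fun S => S.card = m + 1 ∧ i ∈ S ∧ j ∈ S).card : ℝ) = c1 from by
        obtain ⟨m', rfl⟩ : ∃ m', m = m' + 1 := ⟨m - 1, by omega⟩
        rw [show m'+1+1 = m'+2 from rfl]
        rw [count_mem2 (2*(m'+1)+1) m' i j hij, hc1,
          show 2*(m'+1)+1-2 = 2*m'+1 from by omega, show 2*(m'+1)-1 = 2*m'+1 from by omega,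
          show (m'+1)-1 = m' from by omega]]
      rw [hv2]
      simp only [if_neg hij]
      ring
  -- candidate inverse in 1/J form
  set α : ℝ := 2*(2*mr+1)/(mr+1) with hα
  set γ : ℝ := α * (1/(2*(mr+1)*(1-t)) - 1) / (2*mr+1) with hγ
  have hBform : (2*(2*mr+1)/(mr+1)) •
          ((1 : Matrix (Fin (2*m+1)) (Fin (2*m+1)) ℝ) - ((2*mr+1 : ℝ))⁻¹ • Jmat (2*m+1)
            + (1/(2*(mr+1)*(1-t))) • (((2*mr+1 : ℝ))⁻¹ • Jmat (2*m+1)))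
      = α • 1 + γ • Jmat (2*m+1) := by
    rw [hγ, hα]
    module
  have hco1 : (c/2) * α = 1 := by
    rw [hα, hc]; field_simp
  have hco2 : (c/2) * γ + α * (c/2 - t*c^2) + (2*mr+1) * (c/2 - t*c^2) * γ = 0 := by
    rw [hγ, hα, hc]
    field_simp
    ring
  have hcast : ((2*m+1 : ℕ):ℝ) = 2*mr+1 := by rw [hmr]; push_cast; ring
  have hright : HmatB t p * ((2*(2*mr+1)/(mr+1)) •
          ((1 : Matrix (Fin (2*m+1)) (Fin (2*m+1)) ℝ) - ((2*mr+1 : ℝ))⁻¹ • Jmat (2*m+1)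
            + (1/(2*(mr+1)*(1-t))) • (((2*mr+1 : ℝ))⁻¹ • Jmat (2*m+1)))) = 1 := by
    rw [hH, hBform, mul_oneJ, hco1, hcast, hco2]
    simp
  refine ⟨hgv, Matrix.isUnit_det_of_right_inverse hright, ?_⟩
  exact Matrix.inv_eq_right_inv hright
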